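/- For real s > 1: ∑_{l,m,n≥1} (l+m+n)^{-2} l^{-2} m^{-s} + 2 ∑_{l,m,n≥1} (l+m+n)^{-3} l^{-1} m^{-s} = ζ(2,2,s) - 2ζ(3,1,s) + ζ(2,s,2) + ζ(4,s) + ζ(2,2+s). -/

import Mathlib

/-- The double zeta function `ζ(s₁, s₂) = ∑_{m₁ > m₂ > 0} m₁^{-s₁} m₂^{-s₂}`
with real arguments. -/
noncomputable def zr2 (s₁ s₂ : ℝ) : ℝ :=
  ∑' (a : ℕ) (b : ℕ),
    ((a : ℝ) + (b : ℝ) + 2) ^ (-s₁) * ((b : ℝ) + 1) ^ (-s₂)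

/-- The triple zeta function `ζ(s₁, s₂, s₃) = ∑_{m₁ > m₂ > m₃ > 0} ∏ m_j^{-s_j}`
with real arguments. -/
noncomputable def zr3 (s₁ s₂ s₃ : ℝ) : ℝ :=
  ∑' (a : ℕ) (b : ℕ) (c : ℕ),
    ((a : ℝ) + (b : ℝ) + (c : ℝ) + 3) ^ (-s₁) *
      ((b : ℝ) + (c : ℝ) + 2) ^ (-s₂) * ((c : ℝ) + 1) ^ (-s₃)


open ENNReal

noncomputable section

def E1 (p : ℝ) : ℝ≥0∞ := ∑' n : ℕ, ENNReal.ofReal (((n : ℝ) + 1) ^ (-p))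

def E2 (p q : ℝ) : ℝ≥0∞ :=
  ∑' x : ℕ × ℕ, ENNReal.ofReal (((x.1 : ℝ) + (x.2 : ℝ) + 2) ^ (-p) * ((x.2 : ℝ) + 1) ^ (-q))

def E3 (p q r : ℝ) : ℝ≥0∞ :=
  ∑' x : ℕ × ℕ × ℕ, ENNReal.ofReal
    (((x.1 : ℝ) + (x.2.1 : ℝ) + (x.2.2 : ℝ) + 3) ^ (-p) *
      ((x.2.1 : ℝ) + (x.2.2 : ℝ) + 2) ^ (-q) * ((x.2.2 : ℝ) + 1) ^ (-r))

def EL (p q s : ℝ) : ℝ≥0∞ :=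
  ∑' x : ℕ × ℕ × ℕ, ENNReal.ofReal
    (((x.1 : ℝ) + (x.2.1 : ℝ) + (x.2.2 : ℝ) + 3) ^ (-p) *
      ((x.1 : ℝ) + 1) ^ (-q) * ((x.2.1 : ℝ) + 1) ^ (-s))

lemma rpnn (x : ℝ) (hx : 0 < x) (n : ℕ) (r : ℝ) (hr : r = n) : x ^ (-r) = (x ^ n)⁻¹ := by
  rw [hr, Real.rpow_neg hx.le, Real.rpow_natCast]

lemma bridge3 (f : ℕ × ℕ × ℕ → ℝ) (hf : ∀ x, 0 ≤ f x)
    (hfin : (∑' x, ENNReal.ofReal (f x)) ≠ ⊤) :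
    (∑' (a : ℕ) (b : ℕ) (c : ℕ), f (a, b, c)) = (∑' x, ENNReal.ofReal (f x)).toReal := by
  have hsum : Summable f :=
    (ENNReal.summable_toReal hfin).congr fun x => ENNReal.toReal_ofReal (hf x)
  rw [show (∑' x, ENNReal.ofReal (f x)) = ENNReal.ofReal (∑' x, f x) from
    (ENNReal.ofReal_tsum_of_nonneg hf hsum).symm, ENNReal.toReal_ofReal (tsum_nonneg hf)]
  rw [Summable.tsum_prod hsum]
  exact tsum_congr fun a => (Summable.tsum_prod (hsum.prod_factor a)).symm

lemma bridge2 (f : ℕ × ℕ → ℝ) (hf : ∀ x, 0 ≤ f x)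
    (hfin : (∑' x, ENNReal.ofReal (f x)) ≠ ⊤) :
    (∑' (a : ℕ) (b : ℕ), f (a, b)) = (∑' x, ENNReal.ofReal (f x)).toReal := by
  have hsum : Summable f :=
    (ENNReal.summable_toReal hfin).congr fun x => ENNReal.toReal_ofReal (hf x)
  rw [show (∑' x, ENNReal.ofReal (f x)) = ENNReal.ofReal (∑' x, f x) from
    (ENNReal.ofReal_tsum_of_nonneg hf hsum).symm, ENNReal.toReal_ofReal (tsum_nonneg hf)]
  exact (Summable.tsum_prod hsum).symm

lemma summable_rp {p : ℝ} (hp : 1 < p) : Summable (fun n : ℕ => ((n : ℝ) + 1) ^ (-p)) := by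
  have h := Real.summable_nat_rpow_inv.mpr hp
  have h2 : Summable (fun n : ℕ => (((n + 1 : ℕ) : ℝ) ^ p)⁻¹) := (summable_nat_add_iff 1).mpr h
  refine h2.congr fun n => ?_
  push_cast
  rw [Real.rpow_neg (by positivity)]

lemma E1_ne_top {p : ℝ} (hp : 1 < p) : E1 p ≠ ⊤ := by
  rw [E1, ← ENNReal.ofReal_tsum_of_nonneg (fun n => by positivity) (summable_rp hp)]
  exact ENNReal.ofReal_ne_top

lemma E2_comm (s : ℝ) :
    (∑' q : ℕ × ℕ, ENNReal.ofReal (((q.1 : ℝ) + (q.2 : ℝ) + 2) ^ (-(2:ℝ)) * ((q.1 : ℝ) + 1) ^ (-s)))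
      = E2 2 s := by
  rw [E2, ← Equiv.tsum_eq (Equiv.prodComm ℕ ℕ)
    (fun x : ℕ × ℕ => ENNReal.ofReal (((x.1 : ℝ) + (x.2 : ℝ) + 2) ^ (-(2:ℝ)) * ((x.2 : ℝ) + 1) ^ (-s)))]
  refine tsum_congr fun q => ?_
  obtain ⟨m, n⟩ := q
  simp only [Equiv.prodComm_apply, Prod.swap_prod_mk]
  rw [show ((m : ℝ) + (n : ℝ) + 2) = ((n : ℝ) + (m : ℝ) + 2) from by ring]

lemma prod_eq (s : ℝ) :
    (∑' x : ℕ × ℕ × ℕ, ENNReal.ofReal (((x.1 : ℝ) + 1) ^ (-(2:ℝ))) *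
      ENNReal.ofReal (((x.2.1 : ℝ) + (x.2.2 : ℝ) + 2) ^ (-(2:ℝ)) * ((x.2.1 : ℝ) + 1) ^ (-s)))
      = E1 2 * E2 2 s := by
  rw [ENNReal.tsum_prod']
  calc (∑' (a : ℕ) (q : ℕ × ℕ), ENNReal.ofReal (((a : ℝ) + 1) ^ (-(2:ℝ))) *
        ENNReal.ofReal (((q.1 : ℝ) + (q.2 : ℝ) + 2) ^ (-(2:ℝ)) * ((q.1 : ℝ) + 1) ^ (-s)))
      = ∑' (a : ℕ), ENNReal.ofReal (((a : ℝ) + 1) ^ (-(2:ℝ))) * E2 2 s :=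
        tsum_congr fun a => by rw [ENNReal.tsum_mul_left, E2_comm]
    _ = E1 2 * E2 2 s := by rw [ENNReal.tsum_mul_right]; rfl

lemma E2_2s_ne_top {s : ℝ} (hs : 1 < s) : E2 2 s ≠ ⊤ := by
  have hle : ∀ x : ℕ × ℕ, ENNReal.ofReal (((x.1 : ℝ) + (x.2 : ℝ) + 2) ^ (-(2:ℝ)) * ((x.2 : ℝ) + 1) ^ (-s))
      ≤ ENNReal.ofReal (((x.1 : ℝ) + 1) ^ (-(3/2 : ℝ))) * ENNReal.ofReal (((x.2 : ℝ) + 1) ^ (-(1/2 + s))) := by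
    rintro ⟨a, b⟩
    rw [← ENNReal.ofReal_mul (by positivity)]
    apply ENNReal.ofReal_le_ofReal
    have hb0 : (0:ℝ) ≤ (b : ℝ) := Nat.cast_nonneg b
    have ha0 : (0:ℝ) ≤ (a : ℝ) := Nat.cast_nonneg a
    have hab : (0:ℝ) < (a : ℝ) + (b : ℝ) + 2 := by positivity
    have h1 : ((a : ℝ) + (b : ℝ) + 2) ^ (-(2:ℝ))
        ≤ ((a : ℝ) + 1) ^ (-(3/2 : ℝ)) * ((b : ℝ) + 1) ^ (-(1/2 : ℝ)) := by
      have e : ((a : ℝ) + (b : ℝ) + 2) ^ (-(2:ℝ))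
          = ((a : ℝ) + (b : ℝ) + 2) ^ (-(3/2 : ℝ)) * ((a : ℝ) + (b : ℝ) + 2) ^ (-(1/2 : ℝ)) := by
        rw [← Real.rpow_add hab]; norm_num
      rw [e]
      have t1 : ((a : ℝ) + (b : ℝ) + 2) ^ (-(3/2 : ℝ)) ≤ ((a : ℝ) + 1) ^ (-(3/2 : ℝ)) :=
        Real.rpow_le_rpow_of_nonpos (by positivity) (by linarith) (by norm_num)
      have t2 : ((a : ℝ) + (b : ℝ) + 2) ^ (-(1/2 : ℝ)) ≤ ((b : ℝ) + 1) ^ (-(1/2 : ℝ)) :=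
        Real.rpow_le_rpow_of_nonpos (by positivity) (by linarith) (by norm_num)
      exact mul_le_mul t1 t2 (by positivity) (by positivity)
    calc ((a : ℝ) + (b : ℝ) + 2) ^ (-(2:ℝ)) * ((b : ℝ) + 1) ^ (-s)
        ≤ (((a : ℝ) + 1) ^ (-(3/2 : ℝ)) * ((b : ℝ) + 1) ^ (-(1/2 : ℝ))) * ((b : ℝ) + 1) ^ (-s) :=
          mul_le_mul_of_nonneg_right h1 (by positivity)
      _ = ((a : ℝ) + 1) ^ (-(3/2 : ℝ)) * ((b : ℝ) + 1) ^ (-(1/2 + s)) := by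
          rw [mul_assoc, ← Real.rpow_add (by positivity)]
          congr 1
          ring
  have heq : (∑' x : ℕ × ℕ, ENNReal.ofReal (((x.1 : ℝ) + 1) ^ (-(3/2 : ℝ))) *
      ENNReal.ofReal (((x.2 : ℝ) + 1) ^ (-(1/2 + s)))) = E1 (3/2) * E1 (1/2 + s) := by
    rw [ENNReal.tsum_prod']
    calc (∑' (a : ℕ) (b : ℕ), ENNReal.ofReal (((a : ℝ) + 1) ^ (-(3/2 : ℝ))) *
          ENNReal.ofReal (((b : ℝ) + 1) ^ (-(1/2 + s))))
        = ∑' (a : ℕ), ENNReal.ofReal (((a : ℝ) + 1) ^ (-(3/2 : ℝ))) * E1 (1/2 + s) :=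
          tsum_congr fun a => by rw [ENNReal.tsum_mul_left]; rfl
      _ = E1 (3/2) * E1 (1/2 + s) := by rw [ENNReal.tsum_mul_right]; rfl
  have htot : E2 2 s ≤ E1 (3/2) * E1 (1/2 + s) := by
    rw [E2, ← heq]
    exact Summable.tsum_le_tsum hle ENNReal.summable ENNReal.summable
  exact ne_top_of_le_ne_top
    (ENNReal.mul_ne_top (E1_ne_top (by norm_num)) (E1_ne_top (by linarith))) htot

lemma E3_swap (p q r : ℝ) :
    E3 p q r = ∑' x : ℕ × ℕ × ℕ, ENNReal.ofReal
      (((x.1 : ℝ) + (x.2.1 : ℝ) + (x.2.2 : ℝ) + 3) ^ (-p) *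
        ((x.2.1 : ℝ) + (x.2.2 : ℝ) + 2) ^ (-q) * ((x.2.1 : ℝ) + 1) ^ (-r)) := by
  rw [E3, ← Equiv.tsum_eq ((Equiv.refl ℕ).prodCongr (Equiv.prodComm ℕ ℕ))
    (fun x : ℕ × ℕ × ℕ => ENNReal.ofReal
      (((x.1 : ℝ) + (x.2.1 : ℝ) + (x.2.2 : ℝ) + 3) ^ (-p) *
        ((x.2.1 : ℝ) + (x.2.2 : ℝ) + 2) ^ (-q) * ((x.2.2 : ℝ) + 1) ^ (-r)))]
  refine tsum_congr fun x => ?_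
  obtain ⟨a, b, c⟩ := x
  simp only [Equiv.prodCongr_apply, Equiv.coe_refl, Prod.map_apply, Prod.map,
    Equiv.prodComm_apply, Prod.swap_prod_mk, id_eq]
  rw [show ((a : ℝ) + (c : ℝ) + (b : ℝ) + 3) = ((a : ℝ) + (b : ℝ) + (c : ℝ) + 3) from by ring,
    show ((c : ℝ) + (b : ℝ) + 2) = ((b : ℝ) + (c : ℝ) + 2) from by ring]

lemma pf0 (u v c : ℝ) (hu : 0 < u) (hv : 0 < v) :
    (u+v) ^ (-(2:ℝ)) * u ^ (-(2:ℝ)) * c + 2*((u+v) ^ (-(3:ℝ)) * u ^ (-(1:ℝ)) * c)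
      + ((u+v) ^ (-(2:ℝ)) * v ^ (-(2:ℝ)) * c + 2*((u+v) ^ (-(3:ℝ)) * v ^ (-(1:ℝ)) * c))
      = u ^ (-(2:ℝ)) * (v ^ (-(2:ℝ)) * c) := by
  have huv : 0 < u + v := by linarith
  rw [rpnn (u+v) huv 2 2 (by norm_num), rpnn (u+v) huv 3 3 (by norm_num),
    rpnn u hu 2 2 (by norm_num), rpnn u hu 1 1 (by norm_num),
    rpnn v hv 2 2 (by norm_num), rpnn v hv 1 1 (by norm_num)]
  have h1 : u ≠ 0 := hu.ne'
  have h2 : v ≠ 0 := hv.ne'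
  have h3 : u + v ≠ 0 := huv.ne'
  field_simp
  ring

lemma pointwiseA (u v c : ℝ) (hu : 0 < u) (hv : 0 < v) (hc : 0 ≤ c) :
    ENNReal.ofReal ((u+v) ^ (-(2:ℝ)) * u ^ (-(2:ℝ)) * c)
      + 2 * ENNReal.ofReal ((u+v) ^ (-(3:ℝ)) * u ^ (-(1:ℝ)) * c)
      + (ENNReal.ofReal ((u+v) ^ (-(2:ℝ)) * v ^ (-(2:ℝ)) * c)
        + 2 * ENNReal.ofReal ((u+v) ^ (-(3:ℝ)) * v ^ (-(1:ℝ)) * c))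
      = ENNReal.ofReal (u ^ (-(2:ℝ))) * ENNReal.ofReal (v ^ (-(2:ℝ)) * c) := by
  have huv : 0 < u + v := by linarith
  rw [show (2:ℝ≥0∞) = ENNReal.ofReal 2 from by simp]
  rw [← ENNReal.ofReal_mul (by norm_num : (0:ℝ) ≤ 2), ← ENNReal.ofReal_mul (by norm_num : (0:ℝ) ≤ 2)]
  rw [← ENNReal.ofReal_add (by positivity) (by positivity),
      ← ENNReal.ofReal_add (by positivity) (by positivity),
      ← ENNReal.ofReal_add (by positivity) (by positivity),
      ← ENNReal.ofReal_mul (by positivity)]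
  exact congrArg ENNReal.ofReal (pf0 u v c hu hv)

lemma keyA (s : ℝ) :
    EL 2 2 s + 2 * EL 3 1 s + (E3 2 2 s + 2 * E3 3 1 s) = E1 2 * E2 2 s := by
  rw [E3_swap 2 2 s, E3_swap 3 1 s, EL, EL]
  rw [← ENNReal.tsum_mul_left, ← ENNReal.tsum_mul_left]
  rw [← Summable.tsum_add ENNReal.summable ENNReal.summable,
      ← Summable.tsum_add ENNReal.summable ENNReal.summable,
      ← Summable.tsum_add ENNReal.summable ENNReal.summable]
  rw [← prod_eq s]
  refine tsum_congr fun x => ?_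
  obtain ⟨l, m, n⟩ := x
  rw [show ((l : ℝ) + (m : ℝ) + (n : ℝ) + 3) = ((l : ℝ) + 1) + ((m : ℝ) + (n : ℝ) + 2) from by ring]
  exact pointwiseA ((l:ℝ)+1) ((m:ℝ)+(n:ℝ)+2) (((m:ℝ)+1) ^ (-s))
    (by positivity) (by positivity) (by positivity)

def G (s : ℝ) (y : ℕ × ℕ × ℕ) : ℝ≥0∞ :=
  ENNReal.ofReal (((y.1 : ℝ) + 1) ^ (-(2:ℝ)) *
    (((y.2.1 : ℝ) + (y.2.2 : ℝ) + 2) ^ (-(2:ℝ)) * ((y.2.1 : ℝ) + 1) ^ (-s)))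

def R1 : Set (ℕ × ℕ × ℕ) := {y | y.2.1 + y.2.2 + 1 < y.1}
def R2 : Set (ℕ × ℕ × ℕ) := {y | y.1 = y.2.1 + y.2.2 + 1}
def R3 : Set (ℕ × ℕ × ℕ) := {y | y.2.1 < y.1 ∧ y.1 < y.2.1 + y.2.2 + 1}
def R4 : Set (ℕ × ℕ × ℕ) := {y | y.1 = y.2.1}
def R5 : Set (ℕ × ℕ × ℕ) := {y | y.1 < y.2.1}

lemma partition (s : ℝ) (y : ℕ × ℕ × ℕ) :
    G s y = R1.indicator (G s) y + R2.indicator (G s) y + R3.indicator (G s) y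
      + R4.indicator (G s) y + R5.indicator (G s) y := by
  simp only [Set.indicator_apply, R1, R2, R3, R4, R5, Set.mem_setOf_eq]
  split_ifs <;> first | (exfalso; omega) | simp

lemma region1 (s : ℝ) : ∑' y : ℕ × ℕ × ℕ, R1.indicator (G s) y = E3 2 2 s := by
  have hinj : Function.Injective
      (fun x : ℕ × ℕ × ℕ => ((x.1 + x.2.1 + x.2.2 + 2, x.2.2, x.2.1) : ℕ × ℕ × ℕ)) := by
    rintro ⟨a, b, c⟩ ⟨a', b', c'⟩ h
    simp only [Prod.mk.injEq] at h ⊢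
    omega
  have hsupp : Function.support (R1.indicator (G s)) ⊆ Set.range
      (fun x : ℕ × ℕ × ℕ => ((x.1 + x.2.1 + x.2.2 + 2, x.2.2, x.2.1) : ℕ × ℕ × ℕ)) := by
    intro y hy
    have hyR : y ∈ R1 := by
      by_contra hc
      exact hy (Set.indicator_of_notMem hc _)
    obtain ⟨j, m, n⟩ := y
    have h : m + n + 1 < j := hyR
    exact ⟨(j - m - n - 2, n, m), by simp only [Prod.mk.injEq, and_true, true_and]; omega⟩
  rw [E3, ← hinj.tsum_eq hsupp]
  refine tsum_congr fun x => ?_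
  obtain ⟨a, b, c⟩ := x
  simp only [Set.indicator_apply, R1, Set.mem_setOf_eq, G]
  rw [if_pos (show c + b + 1 < a + b + c + 2 by omega)]
  congr 1
  push_cast
  rw [show (a:ℝ) + (b:ℝ) + (c:ℝ) + 2 + 1 = (a:ℝ) + (b:ℝ) + (c:ℝ) + 3 from by ring,
    show (c:ℝ) + (b:ℝ) + 2 = (b:ℝ) + (c:ℝ) + 2 from by ring]
  ring

lemma region2 (s : ℝ) : ∑' y : ℕ × ℕ × ℕ, R2.indicator (G s) y = E2 4 s := by
  have hinj : Function.Injective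
      (fun x : ℕ × ℕ => ((x.1 + x.2 + 1, x.2, x.1) : ℕ × ℕ × ℕ)) := by
    rintro ⟨a, b⟩ ⟨a', b'⟩ h
    simp only [Prod.mk.injEq] at h ⊢
    omega
  have hsupp : Function.support (R2.indicator (G s)) ⊆ Set.range
      (fun x : ℕ × ℕ => ((x.1 + x.2 + 1, x.2, x.1) : ℕ × ℕ × ℕ)) := by
    intro y hy
    have hyR : y ∈ R2 := by
      by_contra hc
      exact hy (Set.indicator_of_notMem hc _)
    obtain ⟨j, m, n⟩ := y
    have h : j = m + n + 1 := hyR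
    exact ⟨(n, m), by simp only [Prod.mk.injEq, and_true, true_and]; omega⟩
  rw [E2, ← hinj.tsum_eq hsupp]
  refine tsum_congr fun x => ?_
  obtain ⟨a, b⟩ := x
  simp only [Set.indicator_apply, R2, Set.mem_setOf_eq, G]
  rw [if_pos (show a + b + 1 = b + a + 1 by omega)]
  congr 1
  push_cast
  rw [show (a:ℝ) + (b:ℝ) + 1 + 1 = (a:ℝ) + (b:ℝ) + 2 from by ring,
    show (b:ℝ) + (a:ℝ) + 2 = (a:ℝ) + (b:ℝ) + 2 from by ring,
    show (-(4:ℝ)) = (-(2:ℝ)) + (-(2:ℝ)) from by norm_num,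
    Real.rpow_add (show (0:ℝ) < (a:ℝ) + (b:ℝ) + 2 from by positivity)]
  ring

lemma region3 (s : ℝ) : ∑' y : ℕ × ℕ × ℕ, R3.indicator (G s) y = E3 2 2 s := by
  have hinj : Function.Injective
      (fun x : ℕ × ℕ × ℕ => ((x.2.1 + x.2.2 + 1, x.2.2, x.1 + x.2.1 + 1) : ℕ × ℕ × ℕ)) := by
    rintro ⟨a, b, c⟩ ⟨a', b', c'⟩ h
    simp only [Prod.mk.injEq] at h ⊢
    omega
  have hsupp : Function.support (R3.indicator (G s)) ⊆ Set.range
      (fun x : ℕ × ℕ × ℕ => ((x.2.1 + x.2.2 + 1, x.2.2, x.1 + x.2.1 + 1) : ℕ × ℕ × ℕ)) := by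
    intro y hy
    have hyR : y ∈ R3 := by
      by_contra hc
      exact hy (Set.indicator_of_notMem hc _)
    obtain ⟨j, m, n⟩ := y
    have h : m < j ∧ j < m + n + 1 := hyR
    exact ⟨(m + n - j, j - m - 1, m), by simp only [Prod.mk.injEq, and_true, true_and]; omega⟩
  rw [E3, ← hinj.tsum_eq hsupp]
  refine tsum_congr fun x => ?_
  obtain ⟨a, b, c⟩ := x
  simp only [Set.indicator_apply, R3, Set.mem_setOf_eq, G]
  rw [if_pos (show c < b + c + 1 ∧ b + c + 1 < c + (a + b + 1) + 1 by omega)]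
  congr 1
  push_cast
  rw [show (b:ℝ) + (c:ℝ) + 1 + 1 = (b:ℝ) + (c:ℝ) + 2 from by ring,
    show (c:ℝ) + ((a:ℝ) + (b:ℝ) + 1) + 2 = (a:ℝ) + (b:ℝ) + (c:ℝ) + 3 from by ring]
  ring

lemma region4 (s : ℝ) : ∑' y : ℕ × ℕ × ℕ, R4.indicator (G s) y = E2 2 (2 + s) := by
  have hinj : Function.Injective
      (fun x : ℕ × ℕ => ((x.2, x.2, x.1) : ℕ × ℕ × ℕ)) := by
    rintro ⟨a, b⟩ ⟨a', b'⟩ h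
    simp only [Prod.mk.injEq] at h ⊢
    omega
  have hsupp : Function.support (R4.indicator (G s)) ⊆ Set.range
      (fun x : ℕ × ℕ => ((x.2, x.2, x.1) : ℕ × ℕ × ℕ)) := by
    intro y hy
    have hyR : y ∈ R4 := by
      by_contra hc
      exact hy (Set.indicator_of_notMem hc _)
    obtain ⟨j, m, n⟩ := y
    have h : j = m := hyR
    exact ⟨(n, j), by simp only [Prod.mk.injEq, and_true, true_and]; omega⟩
  rw [E2, ← hinj.tsum_eq hsupp]
  refine tsum_congr fun x => ?_
  obtain ⟨a, b⟩ := x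
  simp only [Set.indicator_apply, R4, Set.mem_setOf_eq, G]
  rw [if_pos trivial]
  congr 1
  push_cast
  rw [show (b:ℝ) + (a:ℝ) + 2 = (a:ℝ) + (b:ℝ) + 2 from by ring,
    show (-((2:ℝ) + s)) = (-(2:ℝ)) + (-s) from by ring,
    Real.rpow_add (show (0:ℝ) < (b:ℝ) + 1 from by positivity)]
  ring

lemma region5 (s : ℝ) : ∑' y : ℕ × ℕ × ℕ, R5.indicator (G s) y = E3 2 s 2 := by
  have hinj : Function.Injective
      (fun x : ℕ × ℕ × ℕ => ((x.2.2, x.2.1 + x.2.2 + 1, x.1) : ℕ × ℕ × ℕ)) := by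
    rintro ⟨a, b, c⟩ ⟨a', b', c'⟩ h
    simp only [Prod.mk.injEq] at h ⊢
    omega
  have hsupp : Function.support (R5.indicator (G s)) ⊆ Set.range
      (fun x : ℕ × ℕ × ℕ => ((x.2.2, x.2.1 + x.2.2 + 1, x.1) : ℕ × ℕ × ℕ)) := by
    intro y hy
    have hyR : y ∈ R5 := by
      by_contra hc
      exact hy (Set.indicator_of_notMem hc _)
    obtain ⟨j, m, n⟩ := y
    have h : j < m := hyR
    exact ⟨(n, m - j - 1, j), by simp only [Prod.mk.injEq, and_true, true_and]; omega⟩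
  rw [E3, ← hinj.tsum_eq hsupp]
  refine tsum_congr fun x => ?_
  obtain ⟨a, b, c⟩ := x
  simp only [Set.indicator_apply, R5, Set.mem_setOf_eq, G]
  rw [if_pos (show c < b + c + 1 by omega)]
  congr 1
  push_cast
  rw [show (b:ℝ) + (c:ℝ) + 1 + (a:ℝ) + 2 = (a:ℝ) + (b:ℝ) + (c:ℝ) + 3 from by ring,
    show (b:ℝ) + (c:ℝ) + 1 + 1 = (b:ℝ) + (c:ℝ) + 2 from by ring]
  ring

lemma keyB (s : ℝ) :
    E1 2 * E2 2 s = 2 * E3 2 2 s + E3 2 s 2 + E2 4 s + E2 2 (2 + s) := by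
  rw [← prod_eq s]
  have h1 : (∑' x : ℕ × ℕ × ℕ, ENNReal.ofReal (((x.1 : ℝ) + 1) ^ (-(2:ℝ))) *
      ENNReal.ofReal (((x.2.1 : ℝ) + (x.2.2 : ℝ) + 2) ^ (-(2:ℝ)) * ((x.2.1 : ℝ) + 1) ^ (-s)))
      = ∑' y : ℕ × ℕ × ℕ, G s y :=
    tsum_congr fun x => by rw [G, ← ENNReal.ofReal_mul (by positivity)]
  rw [h1, tsum_congr (partition s), Summable.tsum_add ENNReal.summable ENNReal.summable,
    Summable.tsum_add ENNReal.summable ENNReal.summable, Summable.tsum_add ENNReal.summable ENNReal.summable,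
    Summable.tsum_add ENNReal.summable ENNReal.summable,
    region1 s, region2 s, region3 s, region4 s, region5 s]
  ring


lemma zr3_eq (p q r : ℝ) (h : E3 p q r ≠ ⊤) : zr3 p q r = (E3 p q r).toReal := by
  rw [zr3]
  exact bridge3 (fun x : ℕ × ℕ × ℕ =>
    ((x.1 : ℝ) + (x.2.1 : ℝ) + (x.2.2 : ℝ) + 3) ^ (-p) *
      ((x.2.1 : ℝ) + (x.2.2 : ℝ) + 2) ^ (-q) * ((x.2.2 : ℝ) + 1) ^ (-r))
    (fun x => by positivity) h

lemma zr2_eq (p q : ℝ) (h : E2 p q ≠ ⊤) : zr2 p q = (E2 p q).toReal := by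
  rw [zr2]
  exact bridge2 (fun x : ℕ × ℕ =>
    ((x.1 : ℝ) + (x.2 : ℝ) + 2) ^ (-p) * ((x.2 : ℝ) + 1) ^ (-q))
    (fun x => by positivity) h

lemma el_eq (s p q : ℝ) (h : EL p q s ≠ ⊤) :
    (∑' (l : ℕ) (m : ℕ) (n : ℕ),
      ((l : ℝ) + (m : ℝ) + (n : ℝ) + 3) ^ (-p) *
        ((l : ℝ) + 1) ^ (-q) * ((m : ℝ) + 1) ^ (-s)) = (EL p q s).toReal := by
  exact bridge3 (fun x : ℕ × ℕ × ℕ =>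
    ((x.1 : ℝ) + (x.2.1 : ℝ) + (x.2.2 : ℝ) + 3) ^ (-p) *
      ((x.1 : ℝ) + 1) ^ (-q) * ((x.2.1 : ℝ) + 1) ^ (-s))
    (fun x => by positivity) h

theorem functional_double_shuffle_case22 (s : ℝ) (hs : 1 < s) :
    (∑' (l : ℕ) (m : ℕ) (n : ℕ),
      ((l : ℝ) + (m : ℝ) + (n : ℝ) + 3) ^ (-(2 : ℝ)) *
        ((l : ℝ) + 1) ^ (-(2 : ℝ)) * ((m : ℝ) + 1) ^ (-s)) +
    2 * (∑' (l : ℕ) (m : ℕ) (n : ℕ),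
      ((l : ℝ) + (m : ℝ) + (n : ℝ) + 3) ^ (-(3 : ℝ)) *
        ((l : ℝ) + 1) ^ (-(1 : ℝ)) * ((m : ℝ) + 1) ^ (-s)) =
    zr3 2 2 s - 2 * zr3 3 1 s + zr3 2 s 2 + zr2 4 s + zr2 2 (2 + s) := by
  have hT : E1 2 * E2 2 s ≠ ⊤ := ENNReal.mul_ne_top (E1_ne_top one_lt_two) (E2_2s_ne_top hs)
  have hA := keyA s
  have hB := keyB s
  have hAne : EL 2 2 s + 2 * EL 3 1 s + (E3 2 2 s + 2 * E3 3 1 s) ≠ ⊤ := by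
    rw [hA]; exact hT
  have hBne : 2 * E3 2 2 s + E3 2 s 2 + E2 4 s + E2 2 (2 + s) ≠ ⊤ := by
    rw [← hB]; exact hT
  have hEL22 : EL 2 2 s ≠ ⊤ :=
    ne_top_of_le_ne_top hAne (le_self_add.trans le_self_add)
  have hEL31 : EL 3 1 s ≠ ⊤ :=
    ne_top_of_le_ne_top hAne
      (((le_mul_of_one_le_left zero_le one_le_two).trans le_add_self).trans le_self_add)
  have hE3311 : E3 3 1 s ≠ ⊤ :=
    ne_top_of_le_ne_top hAne
      (((le_mul_of_one_le_left zero_le one_le_two).trans le_add_self).trans le_add_self)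
  have hE322 : E3 2 2 s ≠ ⊤ :=
    ne_top_of_le_ne_top hBne
      ((((le_mul_of_one_le_left zero_le one_le_two).trans le_self_add).trans
        le_self_add).trans le_self_add)
  have hE3s2 : E3 2 s 2 ≠ ⊤ :=
    ne_top_of_le_ne_top hBne ((le_add_self.trans le_self_add).trans le_self_add)
  have hE24 : E2 4 s ≠ ⊤ :=
    ne_top_of_le_ne_top hBne (le_add_self.trans le_self_add)
  have hE22s : E2 2 (2 + s) ≠ ⊤ := ne_top_of_le_ne_top hBne le_add_self
  rw [zr3_eq 2 2 s hE322, zr3_eq 3 1 s hE3311, zr3_eq 2 s 2 hE3s2,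
    zr2_eq 4 s hE24, zr2_eq 2 (2 + s) hE22s, el_eq s 2 2 hEL22, el_eq s 3 1 hEL31]
  have hC := congrArg ENNReal.toReal (hA.trans hB)
  have m2 : ∀ x : ℝ≥0∞, x ≠ ⊤ → 2 * x ≠ ⊤ := fun x hx =>
    ENNReal.mul_ne_top ENNReal.ofNat_ne_top hx
  rw [ENNReal.toReal_add (ENNReal.add_ne_top.2 ⟨hEL22, m2 _ hEL31⟩)
        (ENNReal.add_ne_top.2 ⟨hE322, m2 _ hE3311⟩),
      ENNReal.toReal_add hEL22 (m2 _ hEL31),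
      ENNReal.toReal_add hE322 (m2 _ hE3311),
      ENNReal.toReal_add (ENNReal.add_ne_top.2
        ⟨ENNReal.add_ne_top.2 ⟨m2 _ hE322, hE3s2⟩, hE24⟩) hE22s,
      ENNReal.toReal_add (ENNReal.add_ne_top.2 ⟨m2 _ hE322, hE3s2⟩) hE24,
      ENNReal.toReal_add (m2 _ hE322) hE3s2] at hC
  simp only [ENNReal.toReal_mul, ENNReal.toReal_ofNat] at hC
  linarith [hC]
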